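/- For any partition λ, let λ^◇ = { s ∈ λ : a_λ(s) + l_λ(s) + 1 ≡ 0 (mod 2) }. Then the cardinality of λ^◇ equals (|λ| - |λ̃|)/2, where λ̃ is the 2-core of λ. -/

import Mathlib

/-- Two boxes are adjacent if they are horizontal or vertical neighbours. -/
def CellAdjacent (a b : ℕ × ℕ) : Prop :=
  (a.1 = b.1 ∧ b.2 = a.2 + 1) ∨ (a.2 = b.2 ∧ b.1 = a.1 + 1)

/-- `ν` is obtained from `μ` by removing one domino keeping a Young diagram shape. -/
def DominoStep (μ ν : YoungDiagram) : Prop :=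
  ν ≤ μ ∧ ∃ a b : ℕ × ℕ, CellAdjacent a b ∧ a ∉ ν ∧ b ∉ ν ∧
    μ.cells = insert a (insert b ν.cells)

/-- A Young diagram is a 2-core if no domino can be removed from it. -/
def IsTwoCore (μ : YoungDiagram) : Prop := ∀ ν : YoungDiagram, ¬ DominoStep μ ν

/-- `c` is the 2-core of `lam`. -/
def TwoCoreOf (lam c : YoungDiagram) : Prop :=
  Relation.ReflTransGen DominoStep lam c ∧ IsTwoCore c

/-- The hook length `a(s) + l(s) + 1` of a box `s` of `μ`. -/
def hookLen (μ : YoungDiagram) (s : ℕ × ℕ) : ℕ :=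
  (μ.rowLen s.1 - s.2 - 1) + (μ.colLen s.2 - s.1 - 1) + 1

/-- `λ^◇`: the boxes of `λ` with even hook length. -/
def diamond (μ : YoungDiagram) : Finset (ℕ × ℕ) :=
  μ.cells.filter fun s => hookLen μ s % 2 = 0

lemma nat_eq_of_lt_iff {m n : ℕ} (h : ∀ y, y < m ↔ y < n) : m = n := by
  rcases Nat.lt_trichotomy m n with h1|h1|h1
  · exact absurd ((h m).mpr h1) (lt_irrefl m)
  · exact h1
  · exact absurd ((h n).mp h1) (lt_irrefl n)

lemma rowLen_eq' {μ : YoungDiagram} {i r : ℕ} (h : ∀ y, (i,y) ∈ μ ↔ y < r) :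
    μ.rowLen i = r :=
  nat_eq_of_lt_iff fun y => by rw [← YoungDiagram.mem_iff_lt_rowLen]; exact h y

lemma colLen_eq' {μ : YoungDiagram} {j r : ℕ} (h : ∀ x, (x,j) ∈ μ ↔ x < r) :
    μ.colLen j = r :=
  nat_eq_of_lt_iff fun x => by rw [← YoungDiagram.mem_iff_lt_colLen]; exact h x

lemma mem_diamond {μ : YoungDiagram} {s : ℕ × ℕ} :
    s ∈ diamond μ ↔ s ∈ μ ∧ hookLen μ s % 2 = 0 := by
  simp [diamond, YoungDiagram.mem_cells]

lemma hstep (μ ν : YoungDiagram) (i j : ℕ) (ha : (i,j) ∉ ν) (hb : (i,j+1) ∉ ν)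
    (hc : μ.cells = insert (i,j) (insert (i,j+1) ν.cells)) :
    (diamond μ).card = (diamond ν).card + 1 ∧ μ.card = ν.card + 2 := by
  have memμ : ∀ x y : ℕ, (x,y) ∈ μ ↔ (x = i ∧ y = j) ∨ (x = i ∧ y = j+1) ∨ (x,y) ∈ ν := by
    intro x y
    rw [← YoungDiagram.mem_cells, hc]
    simp [Prod.ext_iff, YoungDiagram.mem_cells]
  have haμ : (i,j) ∈ μ := (memμ i j).mpr (Or.inl ⟨rfl,rfl⟩)
  have hbμ : (i,j+1) ∈ μ := (memμ i (j+1)).mpr (Or.inr (Or.inl ⟨rfl,rfl⟩))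
  have memν_row : ∀ y, (i,y) ∈ ν ↔ y < j := by
    intro y
    constructor
    · intro hy
      by_contra hlt
      push_neg at hlt
      exact ha (ν.up_left_mem le_rfl hlt hy)
    · intro hy
      have h1 : (i,y) ∈ μ := μ.up_left_mem le_rfl hy.le haμ
      rcases (memμ i y).mp h1 with ⟨_,h2⟩|⟨_,h2⟩|h2
      · omega
      · omega
      · exact h2
  have rνi : ν.rowLen i = j := rowLen_eq' memν_row
  have rμi : μ.rowLen i = j+2 := by
    apply rowLen_eq'
    intro y
    constructor
    · intro hy
      rcases (memμ i y).mp hy with ⟨_,h2⟩|⟨_,h2⟩|h2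
      · omega
      · omega
      · have := (memν_row y).mp h2; omega
    · intro hy
      exact μ.up_left_mem le_rfl (by omega) hbμ
  have rother : ∀ k, k ≠ i → μ.rowLen k = ν.rowLen k := by
    intro k hk
    apply nat_eq_of_lt_iff
    intro y
    rw [← YoungDiagram.mem_iff_lt_rowLen, ← YoungDiagram.mem_iff_lt_rowLen, memμ]
    constructor
    · rintro (⟨h1,_⟩|⟨h1,_⟩|h1) <;> first | exact absurd h1 hk | exact h1
    · intro h1; exact Or.inr (Or.inr h1)
  have memν_col : ∀ x y, (y = j ∨ y = j+1) → ((x,y) ∈ ν ↔ x < i) := by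
    intro x y hy
    constructor
    · intro hx
      by_contra hlt
      push_neg at hlt
      rcases hy with rfl|rfl
      · exact ha (ν.up_left_mem hlt le_rfl hx)
      · exact hb (ν.up_left_mem hlt le_rfl hx)
    · intro hx
      have h1 : (x,y) ∈ μ := by
        rcases hy with rfl|rfl
        · exact μ.up_left_mem hx.le le_rfl haμ
        · exact μ.up_left_mem hx.le le_rfl hbμ
      rcases (memμ x y).mp h1 with ⟨h2,_⟩|⟨h2,_⟩|h2
      · omega
      · omega
      · exact h2
  have cνj : ν.colLen j = i := colLen_eq' (fun x => memν_col x j (Or.inl rfl))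
  have cνj1 : ν.colLen (j+1) = i := colLen_eq' (fun x => memν_col x (j+1) (Or.inr rfl))
  have cμ : ∀ y, (y = j ∨ y = j+1) → μ.colLen y = i+1 := by
    intro y hy
    apply colLen_eq'
    intro x
    constructor
    · intro hx
      rcases (memμ x y).mp hx with ⟨h2,_⟩|⟨h2,_⟩|h2
      · omega
      · omega
      · have := (memν_col x y hy).mp h2; omega
    · intro hx
      rcases hy with rfl|rfl
      · exact μ.up_left_mem (by omega) le_rfl haμ
      · exact μ.up_left_mem (by omega) le_rfl hbμ
  have cother : ∀ y, y ≠ j → y ≠ j+1 → μ.colLen y = ν.colLen y := by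
    intro y h1 h2
    apply nat_eq_of_lt_iff
    intro x
    rw [← YoungDiagram.mem_iff_lt_colLen, ← YoungDiagram.mem_iff_lt_colLen, memμ]
    constructor
    · rintro (⟨_,h3⟩|⟨_,h3⟩|h3) <;> first | exact absurd h3 h1 | exact absurd h3 h2 | exact h3
    · intro h3; exact Or.inr (Or.inr h3)
  have hνμ : ∀ s : ℕ × ℕ, s ∈ ν → s ∈ μ := by
    rintro ⟨x,y⟩ hxy
    exact (memμ x y).mpr (Or.inr (Or.inr hxy))
  have hdia : (diamond μ).card = (diamond ν).card + 1 := by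
    -- parity preserved away from columns j, j+1
    have pn : ∀ k y, (k,y) ∈ ν → y ≠ j → y ≠ j+1 →
        hookLen μ (k,y) % 2 = hookLen ν (k,y) % 2 := by
      intro k y hm h1 h2
      by_cases hk : k = i
      · subst hk
        have hy : y < j := (memν_row y).mp hm
        simp only [hookLen, rμi, rνi, cother y h1 h2]
        omega
      · simp only [hookLen, rother k hk, cother y h1 h2]
    -- parity flips on columns j, j+1
    have pflip : ∀ k y, (y = j ∨ y = j+1) → k < i →
        hookLen μ (k,y) = hookLen ν (k,y) + 1 := by
      intro k y hy hk
      have hk' : k ≠ i := by omega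
      have hcν : ν.colLen y = i := by rcases hy with rfl|rfl <;> assumption
      simp only [hookLen, rother k hk', cμ y hy, hcν]
      omega
    -- partner relation
    have partner : ∀ k, k < i → hookLen ν (k,j) = hookLen ν (k,j+1) + 1 := by
      intro k hk
      have hm1 : (k,j+1) ∈ ν := (memν_col k (j+1) (Or.inr rfl)).mpr hk
      have hR : j+1 < ν.rowLen k := YoungDiagram.mem_iff_lt_rowLen.mp hm1
      simp only [hookLen, cνj, cνj1]
      omega
    have memboth : ∀ k, k < i → (k,j) ∈ ν ∧ (k,j+1) ∈ ν := fun k hk =>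
      ⟨(memν_col k j (Or.inl rfl)).mpr hk, (memν_col k (j+1) (Or.inr rfl)).mpr hk⟩
    have hooka : hookLen μ (i,j) = 2 := by simp only [hookLen, rμi, cμ j (Or.inl rfl)]; omega
    have hookb : hookLen μ (i,j+1) = 1 := by simp only [hookLen, rμi, cμ (j+1) (Or.inr rfl)]; omega
    set F : ℕ × ℕ → ℕ × ℕ := fun s =>
      if s.1 = i then s else if s.2 = j then (s.1, j+1) else if s.2 = j+1 then (s.1, j) else s
      with hF
    have FF : ∀ s, F (F s) = s := by
      rintro ⟨k,y⟩
      by_cases hk : k = i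
      · simp [hF, hk]
      · by_cases h1 : y = j
        · simp [hF, hk, h1]
        · by_cases h2 : y = j+1
          · simp [hF, hk, h1, h2]
          · simp [hF, hk, h1, h2]
    have key1 : ∀ s ∈ diamond μ, F s ∈ insert (i,j) (diamond ν) := by
      rintro ⟨k,y⟩ hs
      rw [mem_diamond] at hs
      obtain ⟨hsμ, hpar⟩ := hs
      by_cases hk : k = i
      · rw [hk] at hsμ hpar
        have hFe : F (k,y) = (k,y) := by simp [hF, hk]
        rw [hFe, hk]
        rcases Nat.lt_trichotomy y j with hy|hy|hy
        · -- in row i strictly left of j : stays, parity preserved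
          have hmν : (i,y) ∈ ν := (memν_row y).mpr hy
          refine Finset.mem_insert_of_mem (mem_diamond.mpr ⟨hmν, ?_⟩)
          rw [← pn i y hmν (by omega) (by omega)]
          exact hpar
        · rw [hy]; exact Finset.mem_insert_self _ _
        · -- y > j : must be y = j+1, but that has odd hook
          have : y < j + 2 := by rw [← rμi, ← YoungDiagram.mem_iff_lt_rowLen]; exact hsμ
          have hy2 : y = j+1 := by omega
          rw [hy2, hookb] at hpar
          omega
      · have hmν : (k,y) ∈ ν := by
          have := YoungDiagram.mem_iff_lt_rowLen.mp hsμ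
          rw [rother k hk, ← YoungDiagram.mem_iff_lt_rowLen] at this
          exact this
        by_cases h1 : y = j
        · have hki : k < i := (memν_col k y (Or.inl h1)).mp hmν
          have hFe : F (k,y) = (k, j+1) := by simp [hF, hk, h1]
          rw [hFe]
          refine Finset.mem_insert_of_mem (mem_diamond.mpr ⟨(memboth k hki).2, ?_⟩)
          have e1 := pflip k y (Or.inl h1) hki
          have e2 := partner k hki
          rw [h1] at e1 hpar
          omega
        · by_cases h2 : y = j+1
          · have hki : k < i := (memν_col k y (Or.inr h2)).mp hmν
            have hFe : F (k,y) = (k, j) := by simp [hF, hk, h1, h2]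
            rw [hFe]
            refine Finset.mem_insert_of_mem (mem_diamond.mpr ⟨(memboth k hki).1, ?_⟩)
            have e1 := pflip k y (Or.inr h2) hki
            have e2 := partner k hki
            rw [h2] at e1 hpar
            omega
          · have hFe : F (k,y) = (k,y) := by simp [hF, hk, h1, h2]
            rw [hFe]
            refine Finset.mem_insert_of_mem (mem_diamond.mpr ⟨hmν, ?_⟩)
            rw [← pn k y hmν h1 h2]
            exact hpar
    have key2 : ∀ t ∈ insert (i,j) (diamond ν), F t ∈ diamond μ := by
      rintro ⟨k,y⟩ ht
      rcases Finset.mem_insert.mp ht with he|ht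
      · rw [he]
        simp only [hF, if_pos rfl]
        exact mem_diamond.mpr ⟨haμ, by rw [hooka]⟩
      · rw [mem_diamond] at ht
        obtain ⟨htν, hpar⟩ := ht
        by_cases hk : k = i
        · rw [hk] at htν hpar
          have hy : y < j := (memν_row y).mp htν
          have hFe : F (k,y) = (k,y) := by simp [hF, hk]
          rw [hFe, hk]
          exact mem_diamond.mpr ⟨hνμ _ htν, by rw [pn i y htν (by omega) (by omega)]; exact hpar⟩
        · by_cases h1 : y = j
          · have hki : k < i := (memν_col k y (Or.inl h1)).mp htν
            have hFe : F (k,y) = (k, j+1) := by simp [hF, hk, h1]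
            rw [hFe]
            refine mem_diamond.mpr ⟨hνμ _ (memboth k hki).2, ?_⟩
            have e1 := pflip k (j+1) (Or.inr rfl) hki
            have e2 := partner k hki
            rw [h1] at hpar
            omega
          · by_cases h2 : y = j+1
            · have hki : k < i := (memν_col k y (Or.inr h2)).mp htν
              have hFe : F (k,y) = (k, j) := by simp [hF, hk, h1, h2]
              rw [hFe]
              refine mem_diamond.mpr ⟨hνμ _ (memboth k hki).1, ?_⟩
              have e1 := pflip k j (Or.inl rfl) hki
              have e2 := partner k hki
              rw [h2] at hpar
              omega
            · have hFe : F (k,y) = (k,y) := by simp [hF, hk, h1, h2]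
              rw [hFe]
              exact mem_diamond.mpr ⟨hνμ _ htν, by rw [pn k y htν h1 h2]; exact hpar⟩
    have hcard : (diamond μ).card = (insert (i,j) (diamond ν)).card :=
      Finset.card_nbij' F F key1 key2 (fun s _ => FF s) (fun t _ => FF t)
    rw [hcard, Finset.card_insert_of_notMem]
    intro hmem
    exact ha (mem_diamond.mp hmem).1
  refine ⟨hdia, ?_⟩
  show μ.cells.card = ν.cells.card + 2
  rw [hc, Finset.card_insert_of_notMem, Finset.card_insert_of_notMem]
  · simpa [YoungDiagram.mem_cells] using hb
  · simp only [Finset.mem_insert, YoungDiagram.mem_cells, Prod.mk.injEq]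
    push_neg
    exact ⟨fun _ => by omega, ha⟩

lemma hook_transpose (μ : YoungDiagram) (s : ℕ × ℕ) :
    hookLen μ.transpose s = hookLen μ s.swap := by
  obtain ⟨x,y⟩ := s
  simp only [hookLen, Prod.swap_prod_mk, YoungDiagram.rowLen_transpose,
    YoungDiagram.colLen_transpose]
  omega

lemma card_diamond_transpose (μ : YoungDiagram) :
    (diamond μ.transpose).card = (diamond μ).card := by
  refine Finset.card_nbij' Prod.swap Prod.swap ?_ ?_ (fun s _ => Prod.swap_swap s) (fun s _ => Prod.swap_swap s)
  · intro s hs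
    rw [Finset.mem_coe, mem_diamond] at hs ⊢
    rw [YoungDiagram.mem_transpose] at hs
    exact ⟨hs.1, by rw [← hook_transpose]; exact hs.2⟩
  · intro s hs
    rw [Finset.mem_coe, mem_diamond] at hs ⊢
    rw [YoungDiagram.mem_transpose, Prod.swap_swap]
    exact ⟨hs.1, by rw [hook_transpose, Prod.swap_swap]; exact hs.2⟩

lemma card_transpose (μ : YoungDiagram) : μ.transpose.card = μ.card := by
  show (μ.transpose.cells).card = μ.cells.card
  simp [YoungDiagram.transpose]

lemma transpose_cells_insert (μ ν : YoungDiagram) (a b : ℕ × ℕ)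
    (h : μ.cells = insert a (insert b ν.cells)) :
    μ.transpose.cells = insert a.swap (insert b.swap ν.transpose.cells) := by
  ext s
  rw [YoungDiagram.mem_cells, YoungDiagram.mem_transpose, ← YoungDiagram.mem_cells, h]
  simp only [Finset.mem_insert, YoungDiagram.mem_cells, YoungDiagram.mem_transpose]
  constructor
  · rintro (h1|h1|h1)
    · exact Or.inl (by rw [← h1, Prod.swap_swap])
    · exact Or.inr (Or.inl (by rw [← h1, Prod.swap_swap]))
    · exact Or.inr (Or.inr h1)
  · rintro (h1|h1|h1)
    · exact Or.inl (by rw [h1, Prod.swap_swap])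
    · exact Or.inr (Or.inl (by rw [h1, Prod.swap_swap]))
    · exact Or.inr (Or.inr h1)

lemma dstep (μ ν : YoungDiagram) (h : DominoStep μ ν) :
    (diamond μ).card = (diamond ν).card + 1 ∧ μ.card = ν.card + 2 := by
  obtain ⟨hle, a, b, hadj, haν, hbν, hc⟩ := h
  obtain ⟨i,j⟩ := a
  obtain ⟨p,q⟩ := b
  rcases hadj with ⟨h1, h2⟩ | ⟨h1, h2⟩
  · simp only at h1 h2
    rw [← h1] at hc hbν; rw [h2] at hc hbν
    exact hstep μ ν i j haν hbν hc
  · simp only at h1 h2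
    rw [← h1] at hc hbν; rw [h2] at hc hbν
    have hc' := transpose_cells_insert μ ν (i,j) (i+1,j) hc
    simp only [Prod.swap_prod_mk] at hc'
    have haν' : (j,i) ∉ ν.transpose := by
      rw [YoungDiagram.mem_transpose]; exact haν
    have hbν' : (j,i+1) ∉ ν.transpose := by
      rw [YoungDiagram.mem_transpose]; exact hbν
    obtain ⟨hd, hcard⟩ := hstep μ.transpose ν.transpose j i haν' hbν' hc'
    rw [card_diamond_transpose, card_diamond_transpose] at hd
    rw [card_transpose, card_transpose] at hcard
    exact ⟨hd, hcard⟩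
lemma horiz_domino (c : YoungDiagram) (i : ℕ) (h : c.rowLen (i+1) + 2 ≤ c.rowLen i) :
    ∃ ν, DominoStep c ν := by
  set r := c.rowLen i with hr
  have hr2 : 2 ≤ r := by omega
  set S : Finset (ℕ × ℕ) := (c.cells.erase (i,r-1)).erase (i,r-2) with hS
  have memS : ∀ x y : ℕ, ((x,y) ∈ S ↔ (x,y) ∈ c ∧ ¬(x = i ∧ y = r-2) ∧ ¬(x = i ∧ y = r-1)) := by
    intro x y
    simp only [hS, Finset.mem_erase, YoungDiagram.mem_cells, ne_eq, Prod.mk.injEq]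
    tauto
  have hlow : IsLowerSet (S : Set (ℕ × ℕ)) := by
    rintro ⟨x,y⟩ ⟨u,v⟩ ⟨hu, hv⟩ hp
    simp only [Finset.mem_coe] at hp ⊢
    rw [memS] at hp ⊢
    obtain ⟨hpc, hp1, hp2⟩ := hp
    have hqc : (u,v) ∈ c := c.up_left_mem hu hv hpc
    have hkey : r - 2 ≤ v → u = i → False := by
      intro h5 h6
      by_cases hx : x = i
      · have hy : y < r := by
          have := YoungDiagram.mem_iff_lt_rowLen.mp hpc
          rwa [hx] at this
        have : y = r - 2 ∨ y = r - 1 := by omega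
        rcases this with h'|h'
        · exact hp1 ⟨hx, h'⟩
        · exact hp2 ⟨hx, h'⟩
      · have hx1 : i + 1 ≤ x := by omega
        have hl1 : y < c.rowLen x := YoungDiagram.mem_iff_lt_rowLen.mp hpc
        have hl2 := c.rowLen_anti (i+1) x hx1
        omega
    refine ⟨hqc, ?_, ?_⟩ <;> rintro ⟨h6, h7⟩
    · exact hkey (by omega) h6
    · exact hkey (by omega) h6
  refine ⟨⟨S, hlow⟩, ?_, (i,r-2), (i,r-1), Or.inl ⟨rfl, by omega⟩, ?_, ?_, ?_⟩
  · intro s hs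
    change s ∈ S at hs
    obtain ⟨x,y⟩ := s
    exact ((memS x y).mp hs).1
  · show (i,r-2) ∉ S
    exact Finset.notMem_erase _ _
  · show (i,r-1) ∉ S
    intro hmem
    exact Finset.notMem_erase (i,r-1) _ (Finset.mem_of_mem_erase hmem)
  · show c.cells = insert (i,r-2) (insert (i,r-1) S)
    have hbc : (i,r-1) ∈ c.cells := by
      rw [YoungDiagram.mem_cells, YoungDiagram.mem_iff_lt_rowLen]
      omega
    have hac : (i,r-2) ∈ c.cells := by
      rw [YoungDiagram.mem_cells, YoungDiagram.mem_iff_lt_rowLen]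
      omega
    have hne : (i,r-1) ∈ c.cells.erase (i,r-2) := by
      rw [Finset.mem_erase]
      exact ⟨by simp [Prod.ext_iff]; omega, hbc⟩
    rw [hS, Finset.erase_right_comm, Finset.insert_erase hne, Finset.insert_erase hac]

lemma vert_domino (c : YoungDiagram) (i : ℕ) (h1 : c.rowLen (i+1) = c.rowLen i)
    (h2 : 0 < c.rowLen i) (h3 : c.rowLen (i+2) < c.rowLen i) :
    ∃ ν, DominoStep c ν := by
  set r := c.rowLen i with hr
  set S : Finset (ℕ × ℕ) := (c.cells.erase (i+1,r-1)).erase (i,r-1) with hS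
  have memS : ∀ x y : ℕ, ((x,y) ∈ S ↔ (x,y) ∈ c ∧ ¬(x = i ∧ y = r-1) ∧ ¬(x = i+1 ∧ y = r-1)) := by
    intro x y
    simp only [hS, Finset.mem_erase, YoungDiagram.mem_cells, ne_eq, Prod.mk.injEq]
    tauto
  have hlow : IsLowerSet (S : Set (ℕ × ℕ)) := by
    rintro ⟨x,y⟩ ⟨u,v⟩ ⟨hu, hv⟩ hp
    simp only [Finset.mem_coe] at hp ⊢
    rw [memS] at hp ⊢
    obtain ⟨hpc, hp1, hp2⟩ := hp
    have hqc : (u,v) ∈ c := c.up_left_mem hu hv hpc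
    have hyx : y < c.rowLen x := YoungDiagram.mem_iff_lt_rowLen.mp hpc
    have hkey : r - 1 ≤ v → i ≤ u → False := by
      intro h5 h6
      by_cases hx : x ≤ i + 1
      · have hxx : x = i ∨ x = i + 1 := by omega
        have hrx : c.rowLen x = r := by rcases hxx with h'|h' <;> rw [h'] <;> omega
        have hy : y = r - 1 := by omega
        rcases hxx with h'|h'
        · exact hp1 ⟨h', hy⟩
        · exact hp2 ⟨h', hy⟩
      · have h4 := c.rowLen_anti (i+2) x (by omega)
        omega
    refine ⟨hqc, ?_, ?_⟩ <;> rintro ⟨h6, h7⟩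
    · exact hkey (by omega) (by omega)
    · exact hkey (by omega) (by omega)
  refine ⟨⟨S, hlow⟩, ?_, (i,r-1), (i+1,r-1), Or.inr ⟨rfl, rfl⟩, ?_, ?_, ?_⟩
  · intro s hs
    change s ∈ S at hs
    obtain ⟨x,y⟩ := s
    exact ((memS x y).mp hs).1
  · show (i,r-1) ∉ S
    exact Finset.notMem_erase _ _
  · show (i+1,r-1) ∉ S
    intro hmem
    exact Finset.notMem_erase (i+1,r-1) _ (Finset.mem_of_mem_erase hmem)
  · show c.cells = insert (i,r-1) (insert (i+1,r-1) S)
    have hbc : (i+1,r-1) ∈ c.cells := by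
      rw [YoungDiagram.mem_cells, YoungDiagram.mem_iff_lt_rowLen]
      omega
    have hac : (i,r-1) ∈ c.cells := by
      rw [YoungDiagram.mem_cells, YoungDiagram.mem_iff_lt_rowLen]
      omega
    have hne : (i+1,r-1) ∈ c.cells.erase (i,r-1) := by
      rw [Finset.mem_erase]
      exact ⟨by simp [Prod.ext_iff], hbc⟩
    rw [hS, Finset.erase_right_comm, Finset.insert_erase hne, Finset.insert_erase hac]
lemma twocore_step (c : YoungDiagram) (hc : IsTwoCore c) (i : ℕ) (h : 0 < c.rowLen i) :
    c.rowLen i = c.rowLen (i+1) + 1 := by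
  have hA : c.rowLen i ≤ c.rowLen (i+1) + 1 := by
    by_contra h'
    push_neg at h'
    obtain ⟨ν, hν⟩ := horiz_domino c i (by omega)
    exact hc ν hν
  have hanti := c.rowLen_anti i (i+1) (by omega)
  rcases eq_or_lt_of_le hanti with heq|hlt
  · exfalso
    have hconst : ∀ k, c.rowLen (i+k+1) = c.rowLen i := by
      intro k
      induction k with
      | zero => exact heq.symm ▸ rfl
      | succ n ih =>
        have hprev : c.rowLen (i+n) = c.rowLen i := by
          have h1 := c.rowLen_anti i (i+n) (by omega)
          have h2 := c.rowLen_anti (i+n) (i+n+1) (by omega)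
          omega
        by_contra hne
        have hne' : c.rowLen (i+n+2) ≠ c.rowLen i := by
          rw [show i+n+2 = i+(n+1)+1 by omega]
          exact hne
        have h3 := c.rowLen_anti (i+n+1) (i+n+2) (by omega)
        have h4 : c.rowLen (i+n+2) < c.rowLen (i+n) := by omega
        obtain ⟨ν, hν⟩ := vert_domino c (i+n) (by omega) (by omega) (by omega)
        exact hc ν hν
    have h5 := hconst (c.colLen 0)
    have h6 : (i + c.colLen 0 + 1, 0) ∈ c := by
      rw [YoungDiagram.mem_iff_lt_rowLen]
      omega
    have h7 := YoungDiagram.mem_iff_lt_colLen.mp h6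
    omega
  · omega

lemma twocore_rowLen (c : YoungDiagram) (hc : IsTwoCore c) :
    ∀ i, c.rowLen i = c.rowLen 0 - i := by
  intro i
  induction i with
  | zero => simp
  | succ n ih =>
    have hanti := c.rowLen_anti n (n+1) (by omega)
    by_cases h : 0 < c.rowLen n
    · have := twocore_step c hc n h
      omega
    · omega

lemma twocore_colLen (c : YoungDiagram) (hc : IsTwoCore c) :
    ∀ j, c.colLen j = c.rowLen 0 - j := by
  intro j
  apply colLen_eq'
  intro x
  rw [YoungDiagram.mem_iff_lt_rowLen, twocore_rowLen c hc x]
  omega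

lemma twocore_diamond (c : YoungDiagram) (hc : IsTwoCore c) : diamond c = ∅ := by
  rw [Finset.eq_empty_iff_forall_notMem]
  rintro ⟨k,y⟩ hm
  rw [mem_diamond] at hm
  obtain ⟨hmem, hpar⟩ := hm
  have h1 : y < c.rowLen 0 - k := by
    rw [← twocore_rowLen c hc k]
    exact YoungDiagram.mem_iff_lt_rowLen.mp hmem
  have e1 := twocore_rowLen c hc k
  have e2 := twocore_colLen c hc y
  simp only [hookLen] at hpar
  rw [e1, e2] at hpar
  omega

/-- `|λ^◇| = (|λ| - |λ̃|) / 2` where `λ̃` is the 2-core of `λ`. -/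
theorem card_diamond_eq (lam c : YoungDiagram) (h : TwoCoreOf lam c) :
    c.card + 2 * (diamond lam).card = lam.card := by
  obtain ⟨hrel, hcore⟩ := h
  induction hrel using Relation.ReflTransGen.head_induction_on with
  | refl => rw [twocore_diamond c hcore]; simp
  | head hs _ ih =>
    obtain ⟨hd, hcard⟩ := dstep _ _ hs
    rw [hd, hcard]
    omega
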